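/- Let T > 0, γ > 0, ζ ∈ ℝ, μ0, η0 ∈ ℝ, ω0 > 0, ψ0 > 0, ρ ∈ (−1,1). Define θ0(t) := (1 + ζ·exp(2γ(T−t)))/(1 − ζ·exp(2γ(T−t))) and Ψ0(t,s) := exp(−2γ(s−t))·((ζ·exp(2γT) − exp(2γs))/(ζ·exp(2γT) − exp(2γt)))². Fix s ∈ (0,T] and (α,β) ∈ ℝ², and for t < s and (a,b) ∈ ℝ² define G(t,a,b) := Ψ0(t,s)/(2π(s−t)ω0ψ0√(1−ρ²)) · exp( −1/(2(s−t)(1−ρ²)) · [ (α−a−μ0(s−t))²/ω0² − 2ρ(α−a−μ0(s−t))(β−b−η0(s−t))/(ω0ψ0) + (β−b−η0(s−t))²/ψ0² ] ). Then for every t < s with ζ·exp(2γ(T−r)) ≠ 1 for r ∈ {t} and ζ·exp(2γT) ≠ exp(2γt), and every (a,b) ∈ ℝ², ∂_t G + (1/2)ω0²·∂_a²G + ρω0ψ0·∂_a∂_b G + (1/2)ψ0²·∂_b²G + μ0·∂_a G + η0·∂_b G + 2γθ0(t)·G = 0 at (t,a,b). -/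

import Mathlib

open Real

set_option maxHeartbeats 4000000 in
theorem stmt_3 (T γ ζ μ0 η0 ω0 ψ0 ρ : ℝ)
    (hT : 0 < T) (hγ : 0 < γ) (hω0 : 0 < ω0) (hψ0 : 0 < ψ0)
    (hρ : ρ ∈ Set.Ioo (-1 : ℝ) 1)
    (θ0 : ℝ → ℝ)
    (hθ0 : ∀ t, θ0 t = (1 + ζ * Real.exp (2 * γ * (T - t))) /
                       (1 - ζ * Real.exp (2 * γ * (T - t))))
    (Ψ0 : ℝ → ℝ → ℝ)
    (hΨ0 : ∀ t s, Ψ0 t s = Real.exp (-2 * γ * (s - t)) *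
        ((ζ * Real.exp (2 * γ * T) - Real.exp (2 * γ * s)) /
         (ζ * Real.exp (2 * γ * T) - Real.exp (2 * γ * t))) ^ 2)
    (s : ℝ) (hs : s ∈ Set.Ioc (0 : ℝ) T) (α β : ℝ)
    (G : ℝ → ℝ → ℝ → ℝ)
    (hG : ∀ t a b, G t a b =
        Ψ0 t s / (2 * π * (s - t) * ω0 * ψ0 * Real.sqrt (1 - ρ ^ 2)) *
        Real.exp (-(1 / (2 * (s - t) * (1 - ρ ^ 2))) *
          ((α - a - μ0 * (s - t)) ^ 2 / ω0 ^ 2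
            - 2 * ρ * (α - a - μ0 * (s - t)) * (β - b - η0 * (s - t)) / (ω0 * ψ0)
            + (β - b - η0 * (s - t)) ^ 2 / ψ0 ^ 2))) :
    ∀ t : ℝ, t < s →
      ζ * Real.exp (2 * γ * (T - t)) ≠ 1 →
      ζ * Real.exp (2 * γ * T) ≠ Real.exp (2 * γ * t) →
      ∀ a b : ℝ,
        deriv (fun τ => G τ a b) t
          + (1 / 2) * ω0 ^ 2 * deriv (fun x => deriv (fun x' => G t x' b) x) a
          + ρ * ω0 * ψ0 * deriv (fun x => deriv (fun y => G t x y) b) a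
          + (1 / 2) * ψ0 ^ 2 * deriv (fun y => deriv (fun y' => G t a y') y) b
          + μ0 * deriv (fun x => G t x b) a
          + η0 * deriv (fun y => G t a y) b
          + 2 * γ * θ0 t * G t a b = 0 := by
  obtain ⟨hρ1, hρ2⟩ := hρ
  intro t ht hζ1 hζ2 a b
  have hu : 0 < s - t := sub_pos.mpr ht
  have hu' : s - t ≠ 0 := ne_of_gt hu
  have hD : (0:ℝ) < 1 - ρ ^ 2 := by nlinarith
  have hD' : (1:ℝ) - ρ ^ 2 ≠ 0 := ne_of_gt hD
  have hsq : Real.sqrt (1 - ρ ^ 2) ≠ 0 := ne_of_gt (Real.sqrt_pos.mpr hD)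
  have hω : ω0 ≠ 0 := ne_of_gt hω0
  have hψ : ψ0 ≠ 0 := ne_of_gt hψ0
  have hπ : (π:ℝ) ≠ 0 := Real.pi_ne_zero
  have hden : ζ * Real.exp (2 * γ * T) - Real.exp (2 * γ * t) ≠ 0 := sub_ne_zero.mpr hζ2
  have hden' : Real.exp (2 * γ * t) - ζ * Real.exp (2 * γ * T) ≠ 0 :=
    sub_ne_zero.mpr (Ne.symm hζ2)
  have hDen : (2 * π * (s - t) * ω0 * ψ0 * Real.sqrt (1 - ρ ^ 2)) ≠ 0 := by
    have h2π : (0:ℝ) < 2 * π := by positivity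
    exact ne_of_gt (mul_pos (mul_pos (mul_pos (mul_pos h2π hu) hω0) hψ0)
      (Real.sqrt_pos.mpr hD))
  have h2uD : 2 * (s - t) * (1 - ρ ^ 2) ≠ 0 :=
    mul_ne_zero (mul_ne_zero two_ne_zero hu') hD'
  have hθ : θ0 t = (Real.exp (2 * γ * t) + ζ * Real.exp (2 * γ * T)) /
      (Real.exp (2 * γ * t) - ζ * Real.exp (2 * γ * T)) := by
    rw [hθ0]
    have hX : Real.exp (2 * γ * (T - t)) * Real.exp (2 * γ * t) = Real.exp (2 * γ * T) := by
      rw [← Real.exp_add]; congr 1; ring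
    rw [div_eq_div_iff (sub_ne_zero.mpr (Ne.symm hζ1)) hden']
    linear_combination (2 * ζ) * hX
  -- first-order derivative in x
  have key_x : ∀ x y : ℝ, HasDerivAt (fun x' => Ψ0 t s / (2 * π * (s - t) * ω0 * ψ0 * Real.sqrt (1 - ρ ^ 2)) * Real.exp (-(1 / (2 * (s - t) * (1 - ρ ^ 2))) * ((α - x' - μ0 * (s - t)) ^ 2 / ω0 ^ 2 - 2 * ρ * (α - x' - μ0 * (s - t)) * (β - y - η0 * (s - t)) / (ω0 * ψ0) + (β - y - η0 * (s - t)) ^ 2 / ψ0 ^ 2))) (Ψ0 t s / (2 * π * (s - t) * ω0 * ψ0 * Real.sqrt (1 - ρ ^ 2)) * Real.exp (-(1 / (2 * (s - t) * (1 - ρ ^ 2))) * ((α - x - μ0 * (s - t)) ^ 2 / ω0 ^ 2 - 2 * ρ * (α - x - μ0 * (s - t)) * (β - y - η0 * (s - t)) / (ω0 * ψ0) + (β - y - η0 * (s - t)) ^ 2 / ψ0 ^ 2)) * (-(1 / (2 * (s - t) * (1 - ρ ^ 2))) * (-2 * (α - x - μ0 * (s - t)) / ω0 ^ 2 + 2 *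 ρ * (β - y - η0 * (s - t)) / (ω0 * ψ0)))) x := by
    intro x y
    have hA : HasDerivAt (fun x' : ℝ => α - x' - μ0 * (s - t)) (-1) x := by
      simpa using ((hasDerivAt_id x).const_sub α).sub_const (μ0 * (s - t))
    have hQ : HasDerivAt (fun x' => ((α - x' - μ0 * (s - t)) ^ 2 / ω0 ^ 2 - 2 * ρ * (α - x' - μ0 * (s - t)) * (β - y - η0 * (s - t)) / (ω0 * ψ0) + (β - y - η0 * (s - t)) ^ 2 / ψ0 ^ 2))
        (-2 * (α - x - μ0 * (s - t)) / ω0 ^ 2 + 2 * ρ * (β - y - η0 * (s - t)) / (ω0 * ψ0)) x := by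
      have h := (((hA.pow 2).div_const (ω0 ^ 2)).sub
        (((hA.const_mul (2 * ρ)).mul_const (β - y - η0 * (s - t))).div_const (ω0 * ψ0))).add_const
        ((β - y - η0 * (s - t)) ^ 2 / ψ0 ^ 2)
      refine h.congr_deriv ?_
      push_cast
      ring
    have hE := (hQ.const_mul (-(1 / (2 * (s - t) * (1 - ρ ^ 2))))).exp
    have h := hE.const_mul (Ψ0 t s / (2 * π * (s - t) * ω0 * ψ0 * Real.sqrt (1 - ρ ^ 2)))
    refine h.congr_deriv ?_
    ring
  -- first-order derivative in y
  have key_y : ∀ x y : ℝ, HasDerivAt (fun y' => Ψ0 t s / (2 * π * (s - t) * ω0 * ψ0 * Real.sqrt (1 - ρ ^ 2)) * Real.exp (-(1 / (2 * (s - t) * (1 - ρ ^ 2))) * ((α - x - μ0 * (s - t)) ^ 2 / ω0 ^ 2 - 2 * ρ * (α - x - μ0 * (s - t)) * (β - y' - η0 * (s - t)) / (ω0 * ψ0) + (β - y' - η0 * (s - t)) ^ 2 / ψ0 ^ 2))) (Ψ0 t s / (2 * π * (s - t) * ω0 * ψ0 * Real.sqrt (1 - ρ ^ 2)) * Real.exp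 (-(1 / (2 * (s - t) * (1 - ρ ^ 2))) * ((α - x - μ0 * (s - t)) ^ 2 / ω0 ^ 2 - 2 * ρ * (α - x - μ0 * (s - t)) * (β - y - η0 * (s - t)) / (ω0 * ψ0) + (β - y - η0 * (s - t)) ^ 2 / ψ0 ^ 2)) * (-(1 / (2 * (s - t) * (1 - ρ ^ 2))) * (-2 * (β - y - η0 * (s - t)) / ψ0 ^ 2 + 2 * ρ * (α - x - μ0 * (s - t)) / (ω0 * ψ0)))) y := by
    intro x y
    have hB : HasDerivAt (fun y' : ℝ => β - y' - η0 * (s - t)) (-1) y := by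
      simpa using ((hasDerivAt_id y).const_sub β).sub_const (η0 * (s - t))
    have hQ : HasDerivAt (fun y' => ((α - x - μ0 * (s - t)) ^ 2 / ω0 ^ 2 - 2 * ρ * (α - x - μ0 * (s - t)) * (β - y' - η0 * (s - t)) / (ω0 * ψ0) + (β - y' - η0 * (s - t)) ^ 2 / ψ0 ^ 2))
        (-2 * (β - y - η0 * (s - t)) / ψ0 ^ 2 + 2 * ρ * (α - x - μ0 * (s - t)) / (ω0 * ψ0)) y := by
      have h := ((hasDerivAt_const y ((α - x - μ0 * (s - t)) ^ 2 / ω0 ^ 2)).sub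
        ((hB.const_mul (2 * ρ * (α - x - μ0 * (s - t)))).div_const (ω0 * ψ0))).add
        ((hB.pow 2).div_const (ψ0 ^ 2))
      refine h.congr_deriv ?_
      push_cast
      ring
    have hE := (hQ.const_mul (-(1 / (2 * (s - t) * (1 - ρ ^ 2))))).exp
    have h := hE.const_mul (Ψ0 t s / (2 * π * (s - t) * ω0 * ψ0 * Real.sqrt (1 - ρ ^ 2)))
    refine h.congr_deriv ?_
    ring
  -- second derivative in a
  have h_aa : HasDerivAt (fun x => Ψ0 t s / (2 * π * (s - t) * ω0 * ψ0 * Real.sqrt (1 - ρ ^ 2)) * Real.exp (-(1 / (2 * (s - t) * (1 - ρ ^ 2))) * ((α - x - μ0 * (s - t)) ^ 2 / ω0 ^ 2 - 2 * ρ * (α - x - μ0 * (s - t)) * (β - b - η0 * (s - t)) / (ω0 * ψ0) + (β - b - η0 * (s - t)) ^ 2 / ψ0 ^ 2)) * (-(1 / (2 * (s - t) * (1 - ρ ^ 2))) * (-2 * (α - x - μ0 * (s - t)) / ω0 ^ 2 + 2 * ρ * (β - b - η0 * (s - t)) / (ω0 * ψ0)))) (Ψ0 t s / (2 * π * (s -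 t) * ω0 * ψ0 * Real.sqrt (1 - ρ ^ 2)) * Real.exp (-(1 / (2 * (s - t) * (1 - ρ ^ 2))) * ((α - a - μ0 * (s - t)) ^ 2 / ω0 ^ 2 - 2 * ρ * (α - a - μ0 * (s - t)) * (β - b - η0 * (s - t)) / (ω0 * ψ0) + (β - b - η0 * (s - t)) ^ 2 / ψ0 ^ 2)) * ((-(1 / (2 * (s - t) * (1 - ρ ^ 2))) * (-2 * (α - a - μ0 * (s - t)) / ω0 ^ 2 + 2 * ρ * (β - b - η0 * (s - t)) / (ω0 * ψ0))) * (-(1 / (2 * (s - t) * (1 - ρ ^ 2))) * (-2 * (α - a - μ0 * (s - t)) / ω0 ^ 2 + 2 * ρ * (β - b - η0 * (s - t)) / (ω0 * ψ0))) + -(1 / (2 * (s - t) * (1 - ρ ^ 2))) * (2 / ω0 ^ 2))) a := by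
    have hA : HasDerivAt (fun x' : ℝ => α - x' - μ0 * (s - t)) (-1) a := by
      simpa using ((hasDerivAt_id a).const_sub α).sub_const (μ0 * (s - t))
    have hL : HasDerivAt (fun x => (-(1 / (2 * (s - t) * (1 - ρ ^ 2))) * (-2 * (α - x - μ0 * (s - t)) / ω0 ^ 2 + 2 * ρ * (β - b - η0 * (s - t)) / (ω0 * ψ0)))) (-(1 / (2 * (s - t) * (1 - ρ ^ 2))) * (2 / ω0 ^ 2)) a := by
      have h := (((hA.const_mul (-2)).div_const (ω0 ^ 2)).add_const
        (2 * ρ * (β - b - η0 * (s - t)) / (ω0 * ψ0))).const_mul (-(1 / (2 * (s - t) * (1 - ρ ^ 2))))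
      refine h.congr_deriv ?_
      ring
    have h := (key_x a b).mul hL
    refine h.congr_deriv ?_
    ring
  -- mixed derivative
  have h_ab : HasDerivAt (fun x => Ψ0 t s / (2 * π * (s - t) * ω0 * ψ0 * Real.sqrt (1 - ρ ^ 2)) * Real.exp (-(1 / (2 * (s - t) * (1 - ρ ^ 2))) * ((α - x - μ0 * (s - t)) ^ 2 / ω0 ^ 2 - 2 * ρ * (α - x - μ0 * (s - t)) * (β - b - η0 * (s - t)) / (ω0 * ψ0) + (β - b - η0 * (s - t)) ^ 2 / ψ0 ^ 2)) * (-(1 / (2 * (s - t) * (1 - ρ ^ 2))) * (-2 * (β - b - η0 * (s - t)) / ψ0 ^ 2 + 2 * ρ * (α - x - μ0 * (s - t)) / (ω0 * ψ0)))) (Ψ0 t s / (2 * π * (s - t) * ω0 * ψ0 * Real.sqrt (1 - ρ ^ 2)) * Real.exp (-(1 / (2 * (s - t) * (1 - ρ ^ 2))) * ((α - a - μ0 * (s - t)) ^ 2 / ω0 ^ 2 - 2 * ρ * (α - a - μ0 * (s - t)) * (β - b - η0 * (s - t)) / (ω0 * ψ0) + (β - b - η0 * (s - t)) ^ 2 /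 ψ0 ^ 2)) * ((-(1 / (2 * (s - t) * (1 - ρ ^ 2))) * (-2 * (α - a - μ0 * (s - t)) / ω0 ^ 2 + 2 * ρ * (β - b - η0 * (s - t)) / (ω0 * ψ0))) * (-(1 / (2 * (s - t) * (1 - ρ ^ 2))) * (-2 * (β - b - η0 * (s - t)) / ψ0 ^ 2 + 2 * ρ * (α - a - μ0 * (s - t)) / (ω0 * ψ0))) + -(1 / (2 * (s - t) * (1 - ρ ^ 2))) * (-2 * ρ / (ω0 * ψ0)))) a := by
    have hA : HasDerivAt (fun x' : ℝ => α - x' - μ0 * (s - t)) (-1) a := by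
      simpa using ((hasDerivAt_id a).const_sub α).sub_const (μ0 * (s - t))
    have hL : HasDerivAt (fun x => (-(1 / (2 * (s - t) * (1 - ρ ^ 2))) * (-2 * (β - b - η0 * (s - t)) / ψ0 ^ 2 + 2 * ρ * (α - x - μ0 * (s - t)) / (ω0 * ψ0)))) (-(1 / (2 * (s - t) * (1 - ρ ^ 2))) * (-2 * ρ / (ω0 * ψ0))) a := by
      have h := ((((hA.const_mul (2 * ρ))).div_const (ω0 * ψ0)).const_add
        (-2 * (β - b - η0 * (s - t)) / ψ0 ^ 2)).const_mul (-(1 / (2 * (s - t) * (1 - ρ ^ 2))))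
      refine h.congr_deriv ?_
      ring
    have h := (key_x a b).mul hL
    refine h.congr_deriv ?_
    ring
  -- second derivative in b
  have h_bb : HasDerivAt (fun y => Ψ0 t s / (2 * π * (s - t) * ω0 * ψ0 * Real.sqrt (1 - ρ ^ 2)) * Real.exp (-(1 / (2 * (s - t) * (1 - ρ ^ 2))) * ((α - a - μ0 * (s - t)) ^ 2 / ω0 ^ 2 - 2 * ρ * (α - a - μ0 * (s - t)) * (β - y - η0 * (s - t)) / (ω0 * ψ0) + (β - y - η0 * (s - t)) ^ 2 / ψ0 ^ 2)) * (-(1 / (2 * (s - t) * (1 - ρ ^ 2))) * (-2 * (β - y - η0 * (s - t)) / ψ0 ^ 2 + 2 * ρ * (α - a - μ0 * (s - t)) / (ω0 * ψ0)))) (Ψ0 t s / (2 * π * (s - t) * ω0 * ψ0 * Real.sqrt (1 - ρ ^ 2)) * Real.exp (-(1 / (2 * (s - t) * (1 - ρ ^ 2))) * ((α - a - μ0 * (s - t)) ^ 2 / ω0 ^ 2 - 2 * ρ * (α - a - μ0 * (s - t)) * (β - b - η0 * (s - t)) / (ω0 * ψ0) + (β - b - η0 * (s - t)) ^ 2 /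 ψ0 ^ 2)) * ((-(1 / (2 * (s - t) * (1 - ρ ^ 2))) * (-2 * (β - b - η0 * (s - t)) / ψ0 ^ 2 + 2 * ρ * (α - a - μ0 * (s - t)) / (ω0 * ψ0))) * (-(1 / (2 * (s - t) * (1 - ρ ^ 2))) * (-2 * (β - b - η0 * (s - t)) / ψ0 ^ 2 + 2 * ρ * (α - a - μ0 * (s - t)) / (ω0 * ψ0))) + -(1 / (2 * (s - t) * (1 - ρ ^ 2))) * (2 / ψ0 ^ 2))) b := by
    have hB : HasDerivAt (fun y' : ℝ => β - y' - η0 * (s - t)) (-1) b := by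
      simpa using ((hasDerivAt_id b).const_sub β).sub_const (η0 * (s - t))
    have hL : HasDerivAt (fun y => (-(1 / (2 * (s - t) * (1 - ρ ^ 2))) * (-2 * (β - y - η0 * (s - t)) / ψ0 ^ 2 + 2 * ρ * (α - a - μ0 * (s - t)) / (ω0 * ψ0)))) (-(1 / (2 * (s - t) * (1 - ρ ^ 2))) * (2 / ψ0 ^ 2)) b := by
      have h := (((hB.const_mul (-2)).div_const (ψ0 ^ 2)).add_const
        (2 * ρ * (α - a - μ0 * (s - t)) / (ω0 * ψ0))).const_mul (-(1 / (2 * (s - t) * (1 - ρ ^ 2))))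
      refine h.congr_deriv ?_
      ring
    have h := (key_y a b).mul hL
    refine h.congr_deriv ?_
    ring
  -- time derivative
  have key_t : HasDerivAt (fun τ => Real.exp (-2 * γ * (s - τ)) * ((ζ * Real.exp (2 * γ * T) - Real.exp (2 * γ * s)) / (ζ * Real.exp (2 * γ * T) - Real.exp (2 * γ * τ))) ^ 2 / (2 * π * (s - τ) * ω0 * ψ0 * Real.sqrt (1 - ρ ^ 2)) * Real.exp (-(1 / (2 * (s - τ) * (1 - ρ ^ 2))) * ((α - a - μ0 * (s - τ)) ^ 2 / ω0 ^ 2 - 2 * ρ * (α - a - μ0 * (s - τ)) * (β - b - η0 * (s - τ)) / (ω0 * ψ0) + (β - b - η0 * (s - τ)) ^ 2 / ψ0 ^ 2))) (Real.exp (-2 * γ * (s - t)) * ((ζ * Real.exp (2 * γ * T) - Real.exp (2 * γ * s)) / (ζ * Real.exp (2 * γ * T) - Real.exp (2 * γ * t))) ^ 2 / (2 * π * (s - t) * ω0 * ψ0 * Real.sqrt (1 - ρ ^ 2)) * Real.exp (-(1 / (2 * (s - t) * (1 - ρ ^ 2))) * ((α - a - μ0 * (s - t)) ^ 2 / ω0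 ^ 2 - 2 * ρ * (α - a - μ0 * (s - t)) * (β - b - η0 * (s - t)) / (ω0 * ψ0) + (β - b - η0 * (s - t)) ^ 2 / ψ0 ^ 2)) * (2 * γ + 4 * γ * Real.exp (2 * γ * t) / (ζ * Real.exp (2 * γ * T) - Real.exp (2 * γ * t)) + 1 / (s - t) + (-(1 / (2 * (s - t) ^ 2 * (1 - ρ ^ 2))) * ((α - a - μ0 * (s - t)) ^ 2 / ω0 ^ 2 - 2 * ρ * (α - a - μ0 * (s - t)) * (β - b - η0 * (s - t)) / (ω0 * ψ0) + (β - b - η0 * (s - t)) ^ 2 / ψ0 ^ 2) + -(1 / (2 * (s - t) * (1 - ρ ^ 2))) * (2 * (α - a - μ0 * (s - t)) * μ0 / ω0 ^ 2 - 2 * ρ * (μ0 * (β - b - η0 * (s - t)) + (α - a - μ0 * (s - t)) * η0) / (ω0 * ψ0) + 2 * (β - b - η0 * (s - t)) * η0 / ψ0 ^ 2)))) t := by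
    have h_st : HasDerivAt (fun τ : ℝ => s - τ) (-1) t := by
      simpa using (hasDerivAt_id t).const_sub s
    have he1 : HasDerivAt (fun τ => Real.exp (-2 * γ * (s - τ)))
        (Real.exp (-2 * γ * (s - t)) * (2 * γ)) t := by
      have h := (h_st.const_mul (-2 * γ)).exp
      convert h using 1
      ring
    have hlin : HasDerivAt (fun τ : ℝ => 2 * γ * τ) (2 * γ) t := by
      simpa using (hasDerivAt_id t).const_mul (2 * γ)
    have hd : HasDerivAt (fun τ => ζ * Real.exp (2 * γ * T) - Real.exp (2 * γ * τ))
        (-(Real.exp (2 * γ * t) * (2 * γ))) t := hlin.exp.const_sub (ζ * Real.exp (2 * γ * T))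
    have hr := ((hasDerivAt_const t
      (ζ * Real.exp (2 * γ * T) - Real.exp (2 * γ * s))).div hd hden).pow 2
    have hN := he1.mul hr
    have hDn : HasDerivAt (fun τ => (2 * π * (s - τ) * ω0 * ψ0 * Real.sqrt (1 - ρ ^ 2)))
        (2 * π * (-1) * ω0 * ψ0 * Real.sqrt (1 - ρ ^ 2)) t :=
      (((h_st.const_mul (2 * π)).mul_const ω0).mul_const ψ0).mul_const (Real.sqrt (1 - ρ ^ 2))
    have hfrac := hN.div hDn hDen
    have hAt : HasDerivAt (fun τ : ℝ => α - a - μ0 * (s - τ)) μ0 t := by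
      have h := (h_st.const_mul μ0).const_sub (α - a)
      refine h.congr_deriv ?_
      ring
    have hBt : HasDerivAt (fun τ : ℝ => β - b - η0 * (s - τ)) η0 t := by
      have h := (h_st.const_mul η0).const_sub (β - b)
      refine h.congr_deriv ?_
      ring
    have hQt : HasDerivAt (fun τ => ((α - a - μ0 * (s - τ)) ^ 2 / ω0 ^ 2 - 2 * ρ * (α - a - μ0 * (s - τ)) * (β - b - η0 * (s - τ)) / (ω0 * ψ0) + (β - b - η0 * (s - τ)) ^ 2 / ψ0 ^ 2)) ((2 * (α - a - μ0 * (s - t)) * μ0 / ω0 ^ 2 - 2 * ρ * (μ0 * (β - b - η0 * (s - t)) + (α - a - μ0 * (s - t)) * η0) / (ω0 * ψ0) + 2 * (β - b - η0 * (s - t)) * η0 / ψ0 ^ 2)) t := by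
      have h := (((hAt.pow 2).div_const (ω0 ^ 2)).sub
        (((hAt.const_mul (2 * ρ)).mul hBt).div_const (ω0 * ψ0))).add
        ((hBt.pow 2).div_const (ψ0 ^ 2))
      refine h.congr_deriv ?_
      push_cast
      ring
    have hc : HasDerivAt (fun τ => -(1 / (2 * (s - τ) * (1 - ρ ^ 2)))) (-(1 / (2 * (s - t) ^ 2 * (1 - ρ ^ 2)))) t := by
      have hg := (h_st.const_mul 2).mul_const (1 - ρ ^ 2)
      have h := ((hasDerivAt_const t (1:ℝ)).div hg h2uD).neg
      refine h.congr_deriv ?_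
      field_simp
      ring
    have hE := (hc.mul hQt).exp
    have h := hfrac.mul hE
    refine h.congr_deriv ?_
    simp only [Pi.mul_apply, Pi.div_apply, Pi.pow_apply]
    set u := s - t with hu_def
    set d := 1 - ρ ^ 2 with hd_def
    set sq := Real.sqrt d with hsq_def
    set A := α - a - μ0 * u with hA_def
    set B := β - b - η0 * u with hB_def
    set q := A ^ 2 / ω0 ^ 2 - 2 * ρ * A * B / (ω0 * ψ0) + B ^ 2 / ψ0 ^ 2 with hq_def
    set qd := 2 * A * μ0 / ω0 ^ 2 - 2 * ρ * (μ0 * B + A * η0) / (ω0 * ψ0) + 2 * B * η0 / ψ0 ^ 2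
      with hqd_def
    set ex := Real.exp (-(1 / (2 * u * d)) * q) with hex_def
    set e1 := Real.exp (-2 * γ * u) with he1_def
    set e2t := Real.exp (2 * γ * t) with he2t_def
    set e2T := Real.exp (2 * γ * T) with he2T_def
    set e2s := Real.exp (2 * γ * s) with he2s_def
    set v := ζ * e2T - e2s with hv_def
    set w := ζ * e2T - e2t with hw_def
    clear_value u d sq A B q qd ex e1 e2t e2T e2s v w
    field_simp
    linear_combination (e1 * ex * u ^ 2 * γ * v ^ 2 * e2t * d * 8) * mul_inv_cancel₀ hden
  -- assemble
  simp only [hG]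
  have e_aa : (fun x => deriv (fun x' => Ψ0 t s / (2 * π * (s - t) * ω0 * ψ0 * Real.sqrt (1 - ρ ^ 2)) * Real.exp (-(1 / (2 * (s - t) * (1 - ρ ^ 2))) * ((α - x' - μ0 * (s - t)) ^ 2 / ω0 ^ 2 - 2 * ρ * (α - x' - μ0 * (s - t)) * (β - b - η0 * (s - t)) / (ω0 * ψ0) + (β - b - η0 * (s - t)) ^ 2 / ψ0 ^ 2))) x) = fun x => Ψ0 t s / (2 * π * (s - t) * ω0 * ψ0 * Real.sqrt (1 - ρ ^ 2)) * Real.exp (-(1 / (2 * (s - t) * (1 - ρ ^ 2))) * ((α - x - μ0 * (s - t)) ^ 2 / ω0 ^ 2 - 2 * ρ * (α - x - μ0 * (s - t)) * (β - b - η0 * (s - t)) / (ω0 * ψ0) + (β - b - η0 * (s - t)) ^ 2 / ψ0 ^ 2)) * (-(1 / (2 * (s - t) * (1 - ρ ^ 2))) * (-2 * (α - x - μ0 * (s - t)) / ω0 ^ 2 + 2 * ρ * (β - b - η0 * (s - t)) / (ω0 * ψ0))) :=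
    funext fun x => (key_x x b).deriv
  have e_ab : (fun x => deriv (fun y => Ψ0 t s / (2 * π * (s - t) * ω0 * ψ0 * Real.sqrt (1 - ρ ^ 2)) * Real.exp (-(1 / (2 * (s - t) * (1 - ρ ^ 2))) * ((α - x - μ0 * (s - t)) ^ 2 / ω0 ^ 2 - 2 * ρ * (α - x - μ0 * (s - t)) * (β - y - η0 * (s - t)) / (ω0 * ψ0) + (β - y - η0 * (s - t)) ^ 2 / ψ0 ^ 2))) b) = fun x => Ψ0 t s / (2 * π * (s - t) * ω0 * ψ0 * Real.sqrt (1 - ρ ^ 2)) * Real.exp (-(1 / (2 * (s - t) * (1 - ρ ^ 2))) * ((α - x - μ0 * (s - t)) ^ 2 / ω0 ^ 2 - 2 * ρ * (α - x - μ0 * (s - t)) * (β - b - η0 * (s - t)) / (ω0 * ψ0) + (β - b - η0 * (s - t)) ^ 2 / ψ0 ^ 2)) * (-(1 / (2 * (s - t) * (1 - ρ ^ 2))) * (-2 * (β - b - η0 * (s - t)) / ψ0 ^ 2 + 2 * ρ * (α - x - μ0 * (s - t)) / (ω0 * ψ0))) :=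
    funext fun x => (key_y x b).deriv
  have e_bb : (fun y => deriv (fun y' => Ψ0 t s / (2 * π * (s - t) * ω0 * ψ0 * Real.sqrt (1 - ρ ^ 2)) * Real.exp (-(1 / (2 * (s - t) * (1 - ρ ^ 2))) * ((α - a - μ0 * (s - t)) ^ 2 / ω0 ^ 2 - 2 * ρ * (α - a - μ0 * (s - t)) * (β - y' - η0 * (s - t)) / (ω0 * ψ0) + (β - y' - η0 * (s - t)) ^ 2 / ψ0 ^ 2))) y) = fun y => Ψ0 t s / (2 * π * (s - t) * ω0 * ψ0 * Real.sqrt (1 - ρ ^ 2)) * Real.exp (-(1 / (2 * (s - t) * (1 - ρ ^ 2))) * ((α - a - μ0 * (s - t)) ^ 2 / ω0 ^ 2 - 2 * ρ * (α - a - μ0 * (s - t)) * (β - y - η0 * (s - t)) / (ω0 * ψ0) + (β - y - η0 * (s - t)) ^ 2 / ψ0 ^ 2)) * (-(1 / (2 * (s - t) * (1 - ρ ^ 2))) * (-2 * (β - y - η0 * (s - t)) / ψ0 ^ 2 + 2 * ρ * (α - a - μ0 * (s - t)) / (ω0 * ψ0))) :=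
    funext fun y => (key_y a y).deriv
  rw [e_aa, e_ab, e_bb, h_aa.deriv, h_ab.deriv, h_bb.deriv,
    (key_x a b).deriv, (key_y a b).deriv]
  simp only [hΨ0]
  rw [key_t.deriv, hθ]
  set u := s - t with hu_def
  set A := α - a - μ0 * u with hA_def
  set B := β - b - η0 * u with hB_def
  set sq := Real.sqrt (1 - ρ ^ 2) with hsq_def
  set ex := Real.exp (-(1 / (2 * u * (1 - ρ ^ 2))) *
    (A ^ 2 / ω0 ^ 2 - 2 * ρ * A * B / (ω0 * ψ0) + B ^ 2 / ψ0 ^ 2)) with hex_def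
  set e1 := Real.exp (-2 * γ * u) with he1_def
  set e2t := Real.exp (2 * γ * t) with he2t_def
  set e2T := Real.exp (2 * γ * T) with he2T_def
  set e2s := Real.exp (2 * γ * s) with he2s_def
  clear_value u A B sq ex e1 e2t e2T e2s
  have hF : 2 * γ + 4 * γ * e2t / (ζ * e2T - e2t) + 1 / u
      + (-(1 / (2 * u ^ 2 * (1 - ρ ^ 2))) *
          (A ^ 2 / ω0 ^ 2 - 2 * ρ * A * B / (ω0 * ψ0) + B ^ 2 / ψ0 ^ 2)
        + -(1 / (2 * u * (1 - ρ ^ 2))) *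
          (2 * A * μ0 / ω0 ^ 2 - 2 * ρ * (μ0 * B + A * η0) / (ω0 * ψ0) + 2 * B * η0 / ψ0 ^ 2))
      + (1 / 2) * ω0 ^ 2 * ((-(1 / (2 * u * (1 - ρ ^ 2))) * (-2 * A / ω0 ^ 2 + 2 * ρ * B / (ω0 * ψ0))) *
          (-(1 / (2 * u * (1 - ρ ^ 2))) * (-2 * A / ω0 ^ 2 + 2 * ρ * B / (ω0 * ψ0)))
        + -(1 / (2 * u * (1 - ρ ^ 2))) * (2 / ω0 ^ 2))
      + ρ * ω0 * ψ0 * ((-(1 / (2 * u * (1 - ρ ^ 2))) * (-2 * A / ω0 ^ 2 + 2 * ρ * B / (ω0 * ψ0))) *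
          (-(1 / (2 * u * (1 - ρ ^ 2))) * (-2 * B / ψ0 ^ 2 + 2 * ρ * A / (ω0 * ψ0)))
        + -(1 / (2 * u * (1 - ρ ^ 2))) * (-2 * ρ / (ω0 * ψ0)))
      + (1 / 2) * ψ0 ^ 2 * ((-(1 / (2 * u * (1 - ρ ^ 2))) * (-2 * B / ψ0 ^ 2 + 2 * ρ * A / (ω0 * ψ0))) *
          (-(1 / (2 * u * (1 - ρ ^ 2))) * (-2 * B / ψ0 ^ 2 + 2 * ρ * A / (ω0 * ψ0)))
        + -(1 / (2 * u * (1 - ρ ^ 2))) * (2 / ψ0 ^ 2))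
      + μ0 * (-(1 / (2 * u * (1 - ρ ^ 2))) * (-2 * A / ω0 ^ 2 + 2 * ρ * B / (ω0 * ψ0)))
      + η0 * (-(1 / (2 * u * (1 - ρ ^ 2))) * (-2 * B / ψ0 ^ 2 + 2 * ρ * A / (ω0 * ψ0)))
      + 2 * γ * ((e2t + ζ * e2T) / (e2t - ζ * e2T)) = 0 := by
    field_simp
    ring
  set v := ζ * e2T - e2s with hv_def
  set w := ζ * e2T - e2t with hw_def
  clear_value v w
  linear_combination (e1 * (v / w) ^ 2 / (2 * π * u * ω0 * ψ0 * sq) * ex) * hF
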